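/- Let d ≥ 3 and H be integers with 2H ≥ d + 3 (equivalently, H = ⌈d/2⌉ + k with k ≥ 2 when d is even and k ≥ 1 when d is odd). Let G be a d-regular simple graph on a finite vertex set V with n = |V|, and let ε > 0 be such that every nonempty S ⊆ V with |S| ≤ εn satisfies |∂S| > 2(d − H)·|S|. Then any two H-assortative assignments x, x' : V → {−1,+1} either agree at every vertex or differ at more than εn vertices. -/

import Mathlib

/-- The edge boundary of a vertex set `S`: the set of edges of `G` with exactly one
endpoint in `S`. -/
def edgeBoundary {V : Type*} [Fintype V] [DecidableEq V]
    (G : SimpleGraph V) [DecidableRel G.Adj] (S : Finset V) : Finset (Sym2 V) :=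
  G.edgeFinset.filter (fun e => ∃ a, ∃ b, e = s(a, b) ∧ a ∈ S ∧ b ∉ S)

/-- If `d ≥ 3`, `2H ≥ d + 3`, `G` is a `d`-regular graph on `n = |V|`
vertices, and `ε > 0` is such that every nonempty `S ⊆ V` with `|S| ≤ εn` satisfies
`|∂S| > 2(d − H)|S|`, then any two `H`-assortative assignments either agree everywhere
or differ at more than `εn` vertices. -/
theorem stmt0 {V : Type*} [Fintype V] [DecidableEq V]
    (G : SimpleGraph V) [DecidableRel G.Adj] (d H : ℕ)
    (hd : 3 ≤ d) (hH : d + 3 ≤ 2 * H)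
    (hreg : G.IsRegularOfDegree d)
    (ε : ℝ) (hε : 0 < ε)
    (hexp : ∀ S : Finset V, S.Nonempty → (S.card : ℝ) ≤ ε * (Fintype.card V) →
      (2 * ((d : ℝ) - H)) * S.card < ((edgeBoundary G S).card : ℝ))
    (x x' : V → ℤ)
    (hx : ∀ i, x i = 1 ∨ x i = -1) (hx' : ∀ i, x' i = 1 ∨ x' i = -1)
    (hass : ∀ i, H ≤ ((G.neighborFinset i).filter (fun j => x j = x i)).card)
    (hass' : ∀ i, H ≤ ((G.neighborFinset i).filter (fun j => x' j = x' i)).card) :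
    (∀ i, x i = x' i) ∨
      ε * (Fintype.card V) < ((Finset.univ.filter (fun i => x i ≠ x' i)).card : ℝ) := by
  classical
  set S : Finset V := Finset.univ.filter (fun i => x i ≠ x' i) with hSdef
  by_cases hne : S.Nonempty
  · right
    by_contra hcon
    push_neg at hcon
    have key := hexp S hne hcon
    obtain ⟨i₀, hi₀⟩ := hne
    -- H ≤ d
    have hHd : H ≤ d := by
      have h1 := hass i₀
      have h2 : ((G.neighborFinset i₀).filter (fun j => x j = x i₀)).card ≤
          (G.neighborFinset i₀).card := Finset.card_filter_le _ _
      have h3 : (G.neighborFinset i₀).card = d := hreg i₀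
      omega
    -- per-vertex bound
    have hvert : ∀ i ∈ S,
        ((G.neighborFinset i).filter (fun j => j ∉ S)).card ≤ 2 * (d - H) := by
      intro i hiS
      set N := G.neighborFinset i with hN
      have hNd : N.card = d := hreg i
      have hxi : x i ≠ x' i := by
        have := Finset.mem_filter.mp hiS; exact this.2
      -- split for x
      have split1 : (N.filter fun j => x j = x i).card =
          (N.filter fun j => x j = x i ∧ j ∈ S).card +
          (N.filter fun j => x j = x i ∧ j ∉ S).card := by
        rw [← Finset.filter_filter, ← Finset.filter_filter,
          Finset.card_filter_add_card_filter_not]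
      -- pointwise description of x'-agreement
      have key2 : N.filter (fun j => x' j = x' i) =
          N.filter (fun j => (x j = x i ∧ j ∈ S) ∨ (¬ x j = x i ∧ j ∉ S)) := by
        apply Finset.filter_congr
        intro j _
        by_cases hjS : j ∈ S
        · have hj : x j ≠ x' j := (Finset.mem_filter.mp hjS).2
          simp only [hjS, not_true, and_false, or_false, and_true]
          rcases hx i with h | h <;> rcases hx' i with h' | h' <;>
            rcases hx j with g | g <;> rcases hx' j with g' | g' <;>
            constructor <;> intro <;> omega
        · have hj : x j = x' j := by
            by_contra hcc
            exact hjS (Finset.mem_filter.mpr ⟨Finset.mem_univ _, hcc⟩)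
          simp only [hjS, not_false_iff, and_true, and_false, false_or]
          rcases hx i with h | h <;> rcases hx' i with h' | h' <;>
            rcases hx j with g | g <;>
            constructor <;> intro <;> omega
      have split2 : (N.filter fun j => x' j = x' i).card =
          (N.filter fun j => x j = x i ∧ j ∈ S).card +
          (N.filter fun j => ¬ x j = x i ∧ j ∉ S).card := by
        rw [key2, Finset.filter_or, Finset.card_union_of_disjoint]
        rw [Finset.disjoint_left]
        intro a ha hb
        simp only [Finset.mem_filter] at ha hb
        tauto
      have hA : (N.filter fun j => j ∈ S).card + (N.filter fun j => j ∉ S).card = d := by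
        rw [Finset.card_filter_add_card_filter_not, hNd]
      have hBsplit : (N.filter fun j => x j = x i ∧ j ∉ S).card +
          (N.filter fun j => ¬ x j = x i ∧ j ∉ S).card =
          (N.filter fun j => j ∉ S).card := by
        have e1 : (N.filter fun j => x j = x i ∧ j ∉ S) =
            ((N.filter fun j => j ∉ S).filter fun j => x j = x i) := by
          rw [Finset.filter_filter]
          apply Finset.filter_congr; intro j _; tauto
        have e2 : (N.filter fun j => ¬ x j = x i ∧ j ∉ S) =
            ((N.filter fun j => j ∉ S).filter fun j => ¬ x j = x i) := by
          rw [Finset.filter_filter]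
          apply Finset.filter_congr; intro j _; tauto
        rw [e1, e2, Finset.card_filter_add_card_filter_not]
      have hAple : (N.filter fun j => x j = x i ∧ j ∈ S).card ≤
          (N.filter fun j => j ∈ S).card := by
        apply Finset.card_le_card
        intro j hj
        simp only [Finset.mem_filter] at hj ⊢
        tauto
      have h1 := hass i; rw [← hN] at h1; rw [split1] at h1
      have h2 := hass' i; rw [← hN] at h2; rw [split2] at h2
      omega
    -- |∂S| ≤ ∑_{i ∈ S} #(neighbors outside S)
    have hinj : (edgeBoundary G S).card ≤
        (S.sigma fun i => (G.neighborFinset i).filter fun j => j ∉ S).card := by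
      apply Finset.card_le_card_of_injOn
        (fun e => if h : ∃ p : V × V, e = s(p.1, p.2) ∧ p.1 ∈ S ∧ p.2 ∉ S then
          ⟨h.choose.1, h.choose.2⟩ else ⟨i₀, i₀⟩)
      · intro e he
        rw [Finset.mem_coe, edgeBoundary, Finset.mem_filter] at he
        obtain ⟨heE, a, b, hab, haS, hbS⟩ := he
        have hex : ∃ p : V × V, e = s(p.1, p.2) ∧ p.1 ∈ S ∧ p.2 ∉ S :=
          ⟨(a, b), hab, haS, hbS⟩
        simp only [dif_pos hex]
        obtain ⟨he1, he2, he3⟩ := hex.choose_spec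
        rw [Finset.mem_coe, Finset.mem_sigma]
        refine ⟨he2, ?_⟩
        rw [Finset.mem_filter, SimpleGraph.mem_neighborFinset]
        refine ⟨?_, he3⟩
        have : e ∈ G.edgeSet := SimpleGraph.mem_edgeFinset.mp heE
        rw [he1, SimpleGraph.mem_edgeSet] at this
        exact this
      · intro e1 h1 e2 h2 heq
        rw [edgeBoundary, Finset.mem_coe, Finset.mem_filter] at h1 h2
        obtain ⟨_, a1, b1, hab1, ha1, hb1⟩ := h1
        obtain ⟨_, a2, b2, hab2, ha2, hb2⟩ := h2
        have hex1 : ∃ p : V × V, e1 = s(p.1, p.2) ∧ p.1 ∈ S ∧ p.2 ∉ S :=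
          ⟨(a1, b1), hab1, ha1, hb1⟩
        have hex2 : ∃ p : V × V, e2 = s(p.1, p.2) ∧ p.1 ∈ S ∧ p.2 ∉ S :=
          ⟨(a2, b2), hab2, ha2, hb2⟩
        simp only [dif_pos hex1, dif_pos hex2] at heq
        have g1 := hex1.choose_spec.1
        have g2 := hex2.choose_spec.1
        have : hex1.choose.1 = hex2.choose.1 ∧ hex1.choose.2 = hex2.choose.2 := by
          have := Sigma.mk.inj_iff.mp heq
          exact ⟨this.1, by simpa using this.2⟩
        rw [g1, g2, this.1, this.2]
    rw [Finset.card_sigma] at hinj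
    have hsum : ∑ i ∈ S, ((G.neighborFinset i).filter fun j => j ∉ S).card ≤
        S.card * (2 * (d - H)) := by
      calc ∑ i ∈ S, ((G.neighborFinset i).filter fun j => j ∉ S).card
          ≤ ∑ _i ∈ S, 2 * (d - H) := Finset.sum_le_sum hvert
        _ = S.card * (2 * (d - H)) := by rw [Finset.sum_const, smul_eq_mul]
    have hfin : ((edgeBoundary G S).card : ℝ) ≤ 2 * ((d : ℝ) - H) * S.card := by
      have : (edgeBoundary G S).card ≤ S.card * (2 * (d - H)) := le_trans hinj hsum
      have hc : ((S.card * (2 * (d - H)) : ℕ) : ℝ) = 2 * ((d : ℝ) - H) * S.card := by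
        push_cast [Nat.cast_sub hHd]
        ring
      calc ((edgeBoundary G S).card : ℝ) ≤ ((S.card * (2 * (d - H)) : ℕ) : ℝ) := by
            exact_mod_cast this
        _ = 2 * ((d : ℝ) - H) * S.card := hc
    linarith
  · left
    intro i
    by_contra h
    exact hne ⟨i, Finset.mem_filter.mpr ⟨Finset.mem_univ _, h⟩⟩
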